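/- Let f : ℝ → ℝ ∪ {+∞} be proper, convex and lower semicontinuous, let a ∈ X with ‖a‖ = 1, and define F : X → ℝ ∪ {+∞} by F(x) := f(⟪a, x⟫). Let T := prox_F and let P_{a^⊥} denote the orthogonal projection onto the orthogonal complement of the span of a. Then for every x ∈ X and every n ∈ ℕ, Tⁿx = P_{a^⊥}(x) + (prox_f)ⁿ(⟪a, x⟫) • a, where prox_f is the proximity operator of f on ℝ. -/

import Mathlib

open Filter Topology

variable {X : Type*} [NormedAddCommGroup X] [InnerProductSpace ℝ X] [FiniteDimensional ℝ X]

/-- `p` is the proximity operator of `g`: `p x` minimizes `y ↦ g y + ‖x − y‖²/2`. -/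
def IsProxOp {Y : Type*} [NormedAddCommGroup Y] (g : Y → EReal) (p : Y → Y) : Prop :=
  ∀ x y : Y, g (p x) + ((‖x - p x‖ ^ 2 / 2 : ℝ) : EReal) ≤ g y + ((‖x - y‖ ^ 2 / 2 : ℝ) : EReal)

lemma proj_eq_aux (a : X) (ha : ‖a‖ = 1) (x : X) :
    ((Submodule.orthogonalProjection (Submodule.span ℝ {a})ᗮ x : X)) = x - (inner ℝ a x : ℝ) • a := by
  apply Submodule.eq_starProjection_of_mem_orthogonal
  · rw [Submodule.mem_orthogonal]
    intro u hu
    rcases Submodule.mem_span_singleton.1 hu with ⟨c, rfl⟩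
    have h2 : (inner ℝ a a : ℝ) = 1 := by
      rw [real_inner_self_eq_norm_sq, ha]; norm_num
    simp [real_inner_smul_left, inner_sub_right, real_inner_smul_right, h2, ha]
    ring
  · simp only [sub_sub_cancel]
    exact Submodule.le_orthogonal_orthogonal _
      (Submodule.smul_mem _ _ (Submodule.mem_span_singleton_self a))

lemma mid_norm {X : Type*} [NormedAddCommGroup X] [InnerProductSpace ℝ X] (u v : X) :
    ‖(2⁻¹ : ℝ) • (u + v)‖ ^ 2 = (‖u‖ ^ 2 + ‖v‖ ^ 2) / 2 - ‖u - v‖ ^ 2 / 4 := by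
  have := parallelogram_law_with_norm ℝ u v
  rw [norm_smul]
  simp only [Real.norm_eq_abs, abs_of_pos (by norm_num : (0:ℝ) < 2⁻¹)]
  rw [mul_pow]
  nlinarith [this]

lemma norm_decomp {X : Type*} [NormedAddCommGroup X] [InnerProductSpace ℝ X]
    (a : X) (ha : ‖a‖ = 1) (u : X) (hu : (inner ℝ a u : ℝ) = 0) (r : ℝ) :
    ‖u + r • a‖ ^ 2 = ‖u‖ ^ 2 + r ^ 2 := by
  rw [norm_add_sq_real, real_inner_smul_right, real_inner_comm a u, hu, norm_smul]
  simp [Real.norm_eq_abs, mul_pow, sq_abs, ha]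

/-- Let `f : ℝ → ℝ ∪ {+∞}` be proper, convex and lower
semicontinuous, `‖a‖ = 1`, and `F x = f ⟪a, x⟫`. Then the iterates of `T = prox_F`
satisfy `Tⁿ x = P_{a^⊥} x + (prox_f)ⁿ ⟪a, x⟫ • a`. -/
theorem stmt18 (f : ℝ → EReal)
    (hproper : ∃ z : ℝ, f z ≠ ⊤) (hbot : ∀ z : ℝ, f z ≠ ⊥)
    (hconv : ∀ z w t : ℝ, 0 ≤ t → t ≤ 1 →
      f (t * z + (1 - t) * w) ≤ (t : EReal) * f z + ((1 - t : ℝ) : EReal) * f w)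
    (hlsc : LowerSemicontinuous f)
    (a : X) (ha : ‖a‖ = 1)
    (F : X → EReal) (hF : ∀ x : X, F x = f (inner ℝ a x))
    (T : X → X) (hT : IsProxOp F T)
    (p : ℝ → ℝ) (hp : IsProxOp f p) :
    ∀ (x : X) (n : ℕ),
      T^[n] x = (Submodule.orthogonalProjection (Submodule.span ℝ {a})ᗮ x : X)
        + p^[n] (inner ℝ a x) • a := by
  have haa : (inner ℝ a a : ℝ) = 1 := by
    rw [real_inner_self_eq_norm_sq, ha]; norm_num
  obtain ⟨z, hz⟩ := hproper
  -- the key single-step identity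
  have key : ∀ y : X, T y = y - (inner ℝ a y : ℝ) • a + p (inner ℝ a y) • a := by
    intro y
    set s : ℝ := inner ℝ a y with hs
    set c : X := y - s • a + p s • a with hc
    have hac : (inner ℝ a c : ℝ) = p s := by
      simp [hc, inner_add_right, inner_sub_right, real_inner_smul_right, haa, ← hs, ha]
    have hyc : y - c = (s - p s) • a := by rw [hc]; module
    have hnyc : ‖y - c‖ ^ 2 = (s - p s) ^ 2 := by
      rw [hyc, norm_smul]
      simp [Real.norm_eq_abs, mul_pow, sq_abs, ha]
    -- `c` is also a minimizer
    have hmin_c : ∀ w : X,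
        F c + ((‖y - c‖ ^ 2 / 2 : ℝ) : EReal) ≤ F w + ((‖y - w‖ ^ 2 / 2 : ℝ) : EReal) := by
      intro w
      set t : ℝ := inner ℝ a w with ht
      have hw : y - w = ((y - s • a) - (w - t • a)) + (s - t) • a := by module
      have hperp : (inner ℝ a ((y - s • a) - (w - t • a)) : ℝ) = 0 := by
        simp [inner_sub_right, real_inner_smul_right, haa, ← hs, ← ht, ha]
      have hnorm : ‖y - w‖ ^ 2 = ‖(y - s • a) - (w - t • a)‖ ^ 2 + (s - t) ^ 2 := by
        rw [hw, norm_decomp a ha _ hperp]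
      have h1 : ((s - t) ^ 2 : ℝ) / 2 ≤ ‖y - w‖ ^ 2 / 2 := by
        nlinarith [sq_nonneg ‖(y - s • a) - (w - t • a)‖]
      have hpst := hp s t
      simp only [Real.norm_eq_abs, sq_abs] at hpst
      calc F c + ((‖y - c‖ ^ 2 / 2 : ℝ) : EReal)
          = f (p s) + (((s - p s) ^ 2 / 2 : ℝ) : EReal) := by rw [hF, hac, hnyc]
        _ ≤ f t + (((s - t) ^ 2 / 2 : ℝ) : EReal) := hpst
        _ ≤ f t + ((‖y - w‖ ^ 2 / 2 : ℝ) : EReal) :=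
            add_le_add_right (EReal.coe_le_coe_iff.2 h1) _
        _ = F w + ((‖y - w‖ ^ 2 / 2 : ℝ) : EReal) := by rw [hF, ← ht]
    -- both minimize, so values agree
    have h1 := hT y c
    have h2 := hmin_c (T y)
    have hFz : F (z • a) = f z := by rw [hF]; simp [real_inner_smul_right, haa, ha]
    have hTybot : F (T y) ≠ ⊥ := by rw [hF]; exact hbot _
    have hcbot : F c ≠ ⊥ := by rw [hF]; exact hbot _
    have hzbot : f z ≠ ⊥ := hbot z
    have htop1 : F (T y) ≠ ⊤ := by
      intro htop
      have h3 := hT y (z • a)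
      rw [htop, hFz, EReal.top_add_coe] at h3
      have hfz : f z = ((f z).toReal : EReal) := (EReal.coe_toReal hz hzbot).symm
      rw [hfz, ← EReal.coe_add] at h3
      exact (EReal.coe_ne_top _) (top_le_iff.1 h3)
    have htop2 : F c ≠ ⊤ := by
      intro htop
      have hr : F (T y) = ((F (T y)).toReal : EReal) := (EReal.coe_toReal htop1 hTybot).symm
      rw [htop, EReal.top_add_coe, hr, ← EReal.coe_add] at h2
      exact (EReal.coe_ne_top _) (top_le_iff.1 h2)
    set r₁ : ℝ := (F (T y)).toReal with hr₁
    set r₂ : ℝ := (F c).toReal with hr₂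
    have e₁ : F (T y) = (r₁ : EReal) := (EReal.coe_toReal htop1 hTybot).symm
    have e₂ : F c = (r₂ : EReal) := (EReal.coe_toReal htop2 hcbot).symm
    rw [e₁, e₂, ← EReal.coe_add, ← EReal.coe_add] at h1 h2
    have hle1 := EReal.coe_le_coe_iff.1 h1
    have hle2 := EReal.coe_le_coe_iff.1 h2
    -- suppose they differ; consider the midpoint
    by_contra hne
    have hnec : T y ≠ c := hne
    set w : X := (2⁻¹ : ℝ) • (T y + c) with hwdef
    have haw : (inner ℝ a w : ℝ) = 2⁻¹ * inner ℝ a (T y) + (1 - 2⁻¹) * inner ℝ a c := by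
      rw [hwdef, real_inner_smul_right, inner_add_right]
      ring
    have hFw : F w ≤ (((r₁ + r₂) / 2 : ℝ) : EReal) := by
      rw [hF, haw]
      refine le_trans (hconv _ _ 2⁻¹ (by norm_num) (by norm_num)) ?_
      have q1 : f (inner ℝ a (T y)) = (r₁ : EReal) := by rw [← hF]; exact e₁
      have q2 : f (inner ℝ a c) = (r₂ : EReal) := by rw [← hF]; exact e₂
      rw [q1, q2, ← EReal.coe_mul, ← EReal.coe_mul, ← EReal.coe_add]
      apply le_of_eq
      congr 1
      ring
    have hmw : ‖y - w‖ ^ 2 = (‖y - T y‖ ^ 2 + ‖y - c‖ ^ 2) / 2 - ‖T y - c‖ ^ 2 / 4 := by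
      have hyw : y - w = (2⁻¹ : ℝ) • ((y - T y) + (y - c)) := by rw [hwdef]; module
      rw [hyw, mid_norm]
      have : (y - T y) - (y - c) = -(T y - c) := by module
      rw [this, norm_neg]
    have hlast := hT y w
    rw [e₁] at hlast
    have hchain : ((r₁ : ℝ) : EReal) + ((‖y - T y‖ ^ 2 / 2 : ℝ) : EReal)
        ≤ (((r₁ + r₂) / 2 : ℝ) : EReal) + ((‖y - w‖ ^ 2 / 2 : ℝ) : EReal) :=
      le_trans hlast (add_le_add_left hFw _)
    rw [← EReal.coe_add, ← EReal.coe_add] at hchain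
    have hreal := EReal.coe_le_coe_iff.1 hchain
    have hd : (0 : ℝ) < ‖T y - c‖ ^ 2 :=
      pow_pos (norm_pos_iff.2 (sub_ne_zero.2 hnec)) 2
    rw [hmw] at hreal
    linarith
  intro x n
  rw [proj_eq_aux a ha x]
  induction n with
  | zero => simp only [Function.iterate_zero_apply]; module
  | succ n ih =>
      rw [Function.iterate_succ_apply', Function.iterate_succ_apply', ih, key]
      have hin : (inner ℝ a (x - (inner ℝ a x : ℝ) • a + p^[n] (inner ℝ a x) • a) : ℝ)
          = p^[n] (inner ℝ a x) := by
        simp [inner_add_right, inner_sub_right, real_inner_smul_right, haa, ha]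
      rw [hin]
      module
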